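/- Let $0<\lambda<n$, $1\le p<\infty$, $\varphi(B)=r_B^{\lambda}$ and $w(x)=|x|^{\lambda-n}$. Then $S(\chi_{B(0,1)})\notin\mathcal M^{p}(\varphi,w)$; consequently the Calderón operator $S$ is not bounded on $\mathcal M^{p}(\varphi,w)$, even though $\|\chi_{B}\|_{\mathcal M^{p}(\varphi,w)}\lesssim 1$ for every ball $B$ centered at the origin. -/

import Mathlib

open MeasureTheory Metric ENNReal Set

noncomputable section

abbrev En (n : ℕ) := EuclideanSpace ℝ (Fin n)

/-- Weighted Morrey "norm": sup over all balls of `((φ(B))⁻¹ ∫_B f^p w)^{1/p}`. -/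
def morreyNorm (n : ℕ) (p : ℝ) (φ : En n → ℝ → ℝ≥0∞) (w f : En n → ℝ≥0∞) : ℝ≥0∞ :=
  ⨆ (c : En n) (r : ℝ) (_ : 0 < r),
    ((∫⁻ x in ball c r, f x ^ p * w x) / φ c r) ^ (1 / p)

/-- Köthe dual norm of the weighted Morrey space. -/
def kotheNorm (n : ℕ) (p : ℝ) (φ : En n → ℝ → ℝ≥0∞) (w g : En n → ℝ≥0∞) : ℝ≥0∞ :=
  ⨆ (f : En n → ℝ≥0∞) (_ : morreyNorm n p φ w f ≤ 1), ∫⁻ x, f x * g x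

/-- Characteristic function of the ball `B(c,r)`, with values in `ℝ≥0∞`. -/
def chiB {n : ℕ} (c : En n) (r : ℝ) : En n → ℝ≥0∞ := (ball c r).indicator 1

/-- The `n`-dimensional Calderón operator. -/
def calderonS (n : ℕ) (f : En n → ℝ≥0∞) (x : En n) : ℝ≥0∞ :=
  (∫⁻ y in ball (0 : En n) ‖x‖, f y) / ENNReal.ofReal (‖x‖ ^ n) +
    ∫⁻ y in {y : En n | ‖x‖ < ‖y‖}, f y / ENNReal.ofReal (‖y‖ ^ n)

/-- Samko-type Morrey parameter function `φ(B) = r_B^λ`. -/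
def phiSamko (n : ℕ) (lam : ℝ) : En n → ℝ → ℝ≥0∞ := fun _ r => ENNReal.ofReal (r ^ lam)

/-- The power weight `w(x) = |x|^{λ-n}`. -/
def wSamko (n : ℕ) (lam : ℝ) : En n → ℝ≥0∞ :=
  fun y => ENNReal.ofReal (‖y‖ ^ (lam - (n : ℝ)))

section Aux
variable {n : ℕ} {lam : ℝ}

lemma En.nontrivial (hn : 0 < n) : Nontrivial (En n) := by
  haveI : Nonempty (Fin n) := ⟨⟨0, hn⟩⟩
  infer_instance

lemma vol_ball (hn : 0 < n) {r : ℝ} (hr : 0 ≤ r) :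
    volume (ball (0:En n) r) = ENNReal.ofReal (r^n) * volume (ball (0:En n) 1) := by
  haveI := En.nontrivial hn
  rw [Measure.addHaar_ball _ _ hr, finrank_euclideanSpace_fin]

lemma vol_ball_c (hn : 0 < n) (c : En n) {r : ℝ} (hr : 0 ≤ r) :
    volume (ball c r) = ENNReal.ofReal (r^n) * volume (ball (0:En n) 1) := by
  haveI := En.nontrivial hn
  rw [Measure.addHaar_ball _ _ hr, finrank_euclideanSpace_fin]

lemma mem_ann {r s : ℝ} {x : En n} : x ∈ ball (0:En n) s \ ball 0 r ↔ r ≤ ‖x‖ ∧ ‖x‖ < s := by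
  simp [mem_diff, mem_ball_zero_iff, not_lt, and_comm]

lemma vol_ann (hn : 0 < n) {r s : ℝ} (hr : 0 ≤ r) (hrs : r ≤ s) :
    volume (ball (0:En n) s \ ball 0 r)
      = ENNReal.ofReal (s^n - r^n) * volume (ball (0:En n) 1) := by
  rw [measure_diff (ball_subset_ball hrs) measurableSet_ball.nullMeasurableSet
      measure_ball_lt_top.ne, vol_ball hn (hr.trans hrs), vol_ball hn hr,
    ← ENNReal.sub_mul (fun _ _ => measure_ball_lt_top.ne),
    ← ENNReal.ofReal_sub _ (pow_nonneg hr n)]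

lemma le_lint_ann {g : En n → ℝ≥0∞} {b : ℝ≥0∞} {r s : ℝ}
    (hg : ∀ x : En n, r ≤ ‖x‖ → ‖x‖ < s → b ≤ g x) :
    b * volume (ball (0:En n) s \ ball 0 r) ≤ ∫⁻ x in ball (0:En n) s \ ball 0 r, g x := by
  rw [← setLIntegral_const]
  exact setLIntegral_mono' (measurableSet_ball.diff measurableSet_ball)
    (fun x hx => hg x (mem_ann.mp hx).1 (mem_ann.mp hx).2)

lemma lint_ann_le {g : En n → ℝ≥0∞} {b : ℝ≥0∞} {r s : ℝ}
    (hg : ∀ x : En n, r ≤ ‖x‖ → ‖x‖ < s → g x ≤ b) :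
    ∫⁻ x in ball (0:En n) s \ ball 0 r, g x ≤ b * volume (ball (0:En n) s) := by
  calc ∫⁻ x in ball (0:En n) s \ ball 0 r, g x
      ≤ ∫⁻ _ in ball (0:En n) s \ ball 0 r, b :=
        setLIntegral_mono' (measurableSet_ball.diff measurableSet_ball)
          (fun x hx => hg x (mem_ann.mp hx).1 (mem_ann.mp hx).2)
    _ = b * volume (ball (0:En n) s \ ball 0 r) := setLIntegral_const _ _
    _ ≤ b * volume (ball (0:En n) s) := by gcongr; exact diff_subset

/-- constant `c₀ = (1 - 2⁻ⁿ)·|B(0,1)|`. -/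
def c0 (n : ℕ) : ℝ≥0∞ := ENNReal.ofReal (1 - (2⁻¹:ℝ)^n) * volume (ball (0:En n) 1)

lemma c0_pos (hn : 0 < n) : 0 < c0 n := by
  apply ENNReal.mul_pos _ (measure_ball_pos _ _ one_pos).ne'
  simp only [ne_eq, ENNReal.ofReal_eq_zero, not_le, sub_pos]
  exact pow_lt_one₀ (by norm_num) (by norm_num) hn.ne'

lemma c0_ne_top : c0 n ≠ ⊤ := ENNReal.mul_ne_top ENNReal.ofReal_ne_top measure_ball_lt_top.ne

/-- single annulus lower bound for `‖y‖⁻ⁿ`. -/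
lemma ann_inv_lower (hn : 0 < n) {q : ℝ} (hq : 0 < q) :
    c0 n ≤ ∫⁻ y in ball (0:En n) q \ ball 0 (q/2), (ENNReal.ofReal (‖y‖^n))⁻¹ := by
  have hqn : (0:ℝ) < q^n := pow_pos hq n
  refine le_trans ?_ (le_lint_ann (b := (ENNReal.ofReal (q^n))⁻¹) ?_)
  · rw [vol_ann hn (by positivity) (by linarith)]
    have h : q^n - (q/2)^n = q^n * (1 - (2⁻¹:ℝ)^n) := by
      rw [div_eq_mul_inv, mul_pow]; ring
    rw [h, ENNReal.ofReal_mul hqn.le, ← mul_assoc, ← mul_assoc,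
      ENNReal.inv_mul_cancel (ENNReal.ofReal_pos.mpr hqn).ne' ENNReal.ofReal_ne_top, one_mul, c0]
  · intro x hx1 hx2
    exact ENNReal.inv_le_inv' (ENNReal.ofReal_le_ofReal
      (pow_le_pow_left₀ (norm_nonneg x) hx2.le n))

/-- log-type lower bound for the Calderón kernel integral over dyadic annuli. -/
lemma log_lower (hn : 0 < n) (m : ℕ) :
    (m : ℝ≥0∞) * c0 n ≤
      ∫⁻ y in ball (0:En n) 1 \ ball 0 ((2⁻¹:ℝ)^m), (ENNReal.ofReal (‖y‖^n))⁻¹ := by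
  induction m with
  | zero => simp
  | succ m ih =>
    have hq : (0:ℝ) < (2⁻¹:ℝ)^m := by positivity
    have hle1 : ((2⁻¹:ℝ))^m ≤ 1 := pow_le_one₀ (by norm_num) (by norm_num)
    have hsplit : ball (0:En n) 1 \ ball 0 ((2⁻¹:ℝ)^(m+1))
        = (ball (0:En n) 1 \ ball 0 ((2⁻¹:ℝ)^m))
          ∪ (ball (0:En n) ((2⁻¹:ℝ)^m) \ ball 0 ((2⁻¹:ℝ)^m / 2)) := by
      rw [show ((2⁻¹:ℝ))^(m+1) = (2⁻¹:ℝ)^m / 2 by rw [pow_succ]; ring]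
      exact (diff_union_diff_cancel (ball_subset_ball hle1)
        (ball_subset_ball (by linarith))).symm
    have hdisj : Disjoint (ball (0:En n) 1 \ ball 0 ((2⁻¹:ℝ)^m))
        (ball (0:En n) ((2⁻¹:ℝ)^m) \ ball 0 ((2⁻¹:ℝ)^m / 2)) := by
      refine Set.disjoint_left.mpr fun x h1 h2 => h1.2 ?_
      exact h2.1
    rw [hsplit, lintegral_union (measurableSet_ball.diff measurableSet_ball) hdisj]
    push_cast
    rw [add_mul, one_mul]
    exact add_le_add ih (ann_inv_lower hn hq)

lemma w_ball_lower (hn : 0 < n) (hlamn : lam < n) {r : ℝ} (hr : 0 < r) :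
    c0 n * ENNReal.ofReal (r ^ lam) ≤ ∫⁻ x in ball (0:En n) r, wSamko n lam x := by
  have h2' : (0:ℝ) < r/2 := by linarith
  refine le_trans ?_ (le_trans (le_lint_ann (r := r/2) (s := r)
      (b := ENNReal.ofReal (r ^ (lam - (n:ℝ)))) ?_) (lintegral_mono_set diff_subset))
  · rw [vol_ann hn h2'.le (by linarith)]
    have h1 : r^n - (r/2)^n = r^n * (1 - (2⁻¹:ℝ)^n) := by rw [div_eq_mul_inv, mul_pow]; ring
    rw [h1, ENNReal.ofReal_mul (by positivity)]
    have h2 : ENNReal.ofReal (r ^ (lam - (n:ℝ))) * ENNReal.ofReal (r^n)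
        = ENNReal.ofReal (r ^ lam) := by
      rw [← ENNReal.ofReal_mul (by positivity), ← Real.rpow_natCast r n,
        ← Real.rpow_add hr, sub_add_cancel]
    rw [c0, ← h2]; exact le_of_eq (by ring)
  · intro x hx1 hx2
    exact ENNReal.ofReal_le_ofReal
      (Real.rpow_le_rpow_of_nonpos (lt_of_lt_of_le h2' hx1) hx2.le
        (by simpa using hlamn.le))

/-- real computation for the dyadic upper bound. -/
lemma pow_calc {q r a lam : ℝ} (hq : 0 < q) (hr : 0 < r) (n k : ℕ) (hlam : lam = a + n) :
    (r*q^(k+1))^a * (r*q^k)^n = (r^lam * q^a) * (q^lam)^k := by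
  have h1 : ((r*q^k)^n : ℝ) = r^(n:ℝ) * q^((k*n:ℕ):ℝ) := by
    rw [mul_pow, ← pow_mul, Real.rpow_natCast, Real.rpow_natCast]
  have h2 : (r*q^(k+1))^a = r^a * q^(((k+1:ℕ):ℝ)*a) := by
    rw [Real.mul_rpow hr.le (by positivity), ← Real.rpow_natCast q (k+1),
      ← Real.rpow_mul hq.le]
  have h3 : ((q^lam)^k : ℝ) = q^(lam*(k:ℝ)) := by
    rw [← Real.rpow_natCast (q^lam) k, ← Real.rpow_mul hq.le]
  rw [h1, h2, h3, mul_mul_mul_comm, ← Real.rpow_add hr, ← Real.rpow_add hq,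
    mul_assoc, ← Real.rpow_add hq]
  congr 1
  · congr 1; linarith
  · congr 1; push_cast; nlinarith [hlam]

/-- dyadic decomposition of the punctured ball. -/
lemma ball_cover {r : ℝ} (hr : 0 < r) :
    ball (0:En n) r \ {0} =
      ⋃ k : ℕ, (ball (0:En n) (r*(2⁻¹:ℝ)^k) \ ball 0 (r*(2⁻¹:ℝ)^(k+1))) := by
  ext x
  simp only [mem_diff, mem_ball_zero_iff, mem_singleton_iff, mem_iUnion, not_lt]
  constructor
  · rintro ⟨hxr, hx0⟩
    have hx : 0 < ‖x‖ := norm_pos_iff.mpr hx0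
    obtain ⟨j, hj⟩ := exists_pow_lt_of_lt_one (div_pos hx hr) (by norm_num : (2⁻¹:ℝ) < 1)
    have hP : ∃ k, r * (2⁻¹:ℝ)^(k+1) ≤ ‖x‖ := by
      refine ⟨j, ?_⟩
      have h1 : ((2⁻¹:ℝ))^(j+1) ≤ (2⁻¹:ℝ)^j :=
        pow_le_pow_of_le_one (by norm_num) (by norm_num) (by omega)
      have h2 : r * (2⁻¹:ℝ)^j < ‖x‖ := by
        rw [mul_comm, ← lt_div_iff₀ hr]; exact hj
      nlinarith
    classical
    refine ⟨Nat.find hP, ?_, Nat.find_spec hP⟩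
    rcases Nat.eq_zero_or_pos (Nat.find hP) with h0 | hpos
    · rw [h0]; simpa using hxr
    · have := Nat.find_min hP (Nat.sub_lt hpos one_pos)
      push_neg at this
      have heq : Nat.find hP - 1 + 1 = Nat.find hP := Nat.succ_pred_eq_of_pos hpos
      rw [heq] at this
      exact this
  · rintro ⟨k, hk1, hk2⟩
    have h1 : ((2⁻¹:ℝ))^k ≤ 1 := pow_le_one₀ (by norm_num) (by norm_num)
    have hx : 0 < ‖x‖ := lt_of_lt_of_le (by positivity) hk2
    exact ⟨lt_of_lt_of_le hk1 (by nlinarith), norm_pos_iff.mp hx⟩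

def Cw (n : ℕ) (lam : ℝ) : ℝ≥0∞ :=
  ENNReal.ofReal ((2⁻¹:ℝ) ^ (lam - (n:ℝ))) * volume (ball (0:En n) 1)
    * (1 - ENNReal.ofReal ((2⁻¹:ℝ) ^ lam))⁻¹

lemma geom_lt_one (hlam0 : 0 < lam) : ENNReal.ofReal ((2⁻¹:ℝ) ^ lam) < 1 := by
  rw [← ENNReal.ofReal_one]
  exact ENNReal.ofReal_lt_ofReal_iff_of_nonneg (by positivity) |>.mpr
    (Real.rpow_lt_one (by norm_num) (by norm_num) hlam0)

lemma Cw_ne_top (hlam0 : 0 < lam) : Cw n lam ≠ ⊤ := by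
  refine ENNReal.mul_ne_top (ENNReal.mul_ne_top ENNReal.ofReal_ne_top
    measure_ball_lt_top.ne) ?_
  rw [ENNReal.inv_ne_top]
  exact (tsub_pos_of_lt (geom_lt_one hlam0)).ne'

lemma w_ball_upper (hn : 0 < n) (hlam0 : 0 < lam) (hlamn : lam < n) {r : ℝ} (hr : 0 < r) :
    ∫⁻ x in ball (0:En n) r, wSamko n lam x ≤ Cw n lam * ENNReal.ofReal (r ^ lam) := by
  haveI : Nonempty (Fin n) := ⟨⟨0, hn⟩⟩
  set q : ℝ := (2⁻¹:ℝ) with hqdef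
  have hq : 0 < q := by norm_num [hqdef]
  set a : ℝ := lam - (n:ℝ) with hadef
  have ha : a ≤ 0 := by simp [hadef]; exact_mod_cast hlamn.le
  have h0 : ∫⁻ x in ball (0:En n) r, wSamko n lam x
      = ∫⁻ x in ball (0:En n) r \ {0}, wSamko n lam x := by
    refine (setLIntegral_congr ?_).symm
    exact diff_ae_eq_self.mpr (measure_mono_null inter_subset_right (measure_singleton 0))
  rw [h0, ball_cover hr, lintegral_iUnion
    (fun k => measurableSet_ball.diff measurableSet_ball) ?_ _]
  swap
  · intro i j hij
    rcases hij.lt_or_gt with h | h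
    all_goals {
      refine Set.disjoint_left.mpr fun x hx1 hx2 => ?_
      rw [mem_diff, mem_ball_zero_iff] at hx1 hx2
      have hxi := hx1.1; have hxj := not_lt.mp (fun hc => hx2.2 (mem_ball_zero_iff.mpr hc))
      have hxj' := hx2.1; have hxi' := not_lt.mp (fun hc => hx1.2 (mem_ball_zero_iff.mpr hc))
      have hmono : ∀ a b : ℕ, a ≤ b → ((2⁻¹:ℝ))^b ≤ (2⁻¹:ℝ)^a := fun a b hab =>
        pow_le_pow_of_le_one (by norm_num) (by norm_num) hab
      first
      | nlinarith [hmono (i+1) j (by omega), hr]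
      | nlinarith [hmono (j+1) i (by omega), hr]
    }
  · calc ∑' k, ∫⁻ x in ball (0:En n) (r*q^k) \ ball 0 (r*q^(k+1)), wSamko n lam x
        ≤ ∑' k, (ENNReal.ofReal (r^lam * q^a) * volume (ball (0:En n) 1))
            * ENNReal.ofReal (q^lam) ^ k := by
          refine ENNReal.tsum_le_tsum fun k => ?_
          have hb : ∫⁻ x in ball (0:En n) (r*q^k) \ ball 0 (r*q^(k+1)), wSamko n lam x
              ≤ ENNReal.ofReal ((r*q^(k+1))^a) * volume (ball (0:En n) (r*q^k)) := by
            refine lint_ann_le fun x hx1 hx2 => ?_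
            exact ENNReal.ofReal_le_ofReal
              (Real.rpow_le_rpow_of_nonpos (by positivity) hx1 ha)
          refine hb.trans ?_
          rw [vol_ball hn (by positivity), ← mul_assoc,
            ← ENNReal.ofReal_mul (by positivity),
            pow_calc (lam := lam) hq hr n k (by push_cast [hadef]; ring),
            ENNReal.ofReal_mul (by positivity),
            ENNReal.ofReal_pow (by positivity), mul_right_comm]
      _ = (ENNReal.ofReal (r^lam * q^a) * volume (ball (0:En n) 1))
            * (1 - ENNReal.ofReal (q^lam))⁻¹ := by
          rw [ENNReal.tsum_mul_left, ENNReal.tsum_geometric]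
      _ ≤ Cw n lam * ENNReal.ofReal (r ^ lam) := by
          rw [Cw, ENNReal.ofReal_mul (by positivity)]
          exact le_of_eq (by ring)

/-- the indicator to the power `p` times anything is at most that thing. -/
lemma chi_pow_mul_le {c : En n} {R p : ℝ} (hp : 0 < p) (x : En n) (w' : ℝ≥0∞) :
    chiB c R x ^ p * w' ≤ w' := by
  unfold chiB
  by_cases hx : x ∈ ball c R
  · simp [indicator_of_mem hx]
  · simp [indicator_of_notMem hx, ENNReal.zero_rpow_of_pos hp]

/-- the constant bounding all Morrey averages of `w` over balls. -/
def Kc (n : ℕ) (lam : ℝ) : ℝ≥0∞ :=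
  Cw n lam * ENNReal.ofReal ((3:ℝ)^lam) + volume (ball (0:En n) 1)

lemma Kc_ne_top (hlam0 : 0 < lam) : Kc n lam ≠ ⊤ := by
  rw [Kc, ENNReal.add_ne_top]
  exact ⟨ENNReal.mul_ne_top (Cw_ne_top hlam0) ENNReal.ofReal_ne_top, measure_ball_lt_top.ne⟩

/-- the key uniform bound on averages of the weight over arbitrary balls. -/
lemma w_avg_le (hn : 0 < n) (hlam0 : 0 < lam) (hlamn : lam < n)
    (c : En n) {r : ℝ} (hr : 0 < r) :
    ∫⁻ x in ball c r, wSamko n lam x ≤ Kc n lam * ENNReal.ofReal (r ^ lam) := by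
  rcases le_or_gt ‖c‖ (2*r) with hc | hc
  · have hsub : ball c r ⊆ ball (0:En n) (3*r) := by
      apply ball_subset_ball'
      rw [dist_zero_right]
      linarith
    calc ∫⁻ x in ball c r, wSamko n lam x
        ≤ ∫⁻ x in ball (0:En n) (3*r), wSamko n lam x := lintegral_mono_set hsub
      _ ≤ Cw n lam * ENNReal.ofReal ((3*r) ^ lam) := w_ball_upper hn hlam0 hlamn (by linarith)
      _ ≤ Kc n lam * ENNReal.ofReal (r ^ lam) := by
          rw [Real.mul_rpow (by norm_num) hr.le, ENNReal.ofReal_mul (by positivity), Kc]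
          rw [add_mul]
          exact le_trans (le_of_eq (by ring)) le_self_add
  · have hpt : ∀ x ∈ ball c r, wSamko n lam x ≤ ENNReal.ofReal (r ^ (lam - (n:ℝ))) := by
      intro x hx
      have h1 : ‖c - x‖ < r := by
        rw [← dist_eq_norm]
        rw [mem_ball, dist_comm] at hx
        exact hx
      have h2 : r ≤ ‖x‖ := by
        have := norm_sub_norm_le c x
        linarith
      exact ENNReal.ofReal_le_ofReal
        (Real.rpow_le_rpow_of_nonpos hr h2 (by simpa using hlamn.le))
    calc ∫⁻ x in ball c r, wSamko n lam x
        ≤ ∫⁻ _ in ball c r, ENNReal.ofReal (r ^ (lam - (n:ℝ))) :=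
          setLIntegral_mono' measurableSet_ball hpt
      _ = ENNReal.ofReal (r ^ (lam - (n:ℝ))) * volume (ball c r) := setLIntegral_const _ _
      _ = ENNReal.ofReal (r ^ lam) * volume (ball (0:En n) 1) := by
          rw [vol_ball_c hn c hr.le, ← mul_assoc, ← ENNReal.ofReal_mul (by positivity),
            ← Real.rpow_natCast r n, ← Real.rpow_add hr, sub_add_cancel]
      _ ≤ Kc n lam * ENNReal.ofReal (r ^ lam) := by
          rw [Kc, add_mul, mul_comm]
          exact le_add_self

/-- Part 3: uniform bound on the Morrey norm of characteristic functions. -/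
lemma part3 (hn : 0 < n) {p : ℝ} (hp : 1 ≤ p) (hlam0 : 0 < lam) (hlamn : lam < n)
    (c' : En n) (R : ℝ) :
    morreyNorm n p (phiSamko n lam) (wSamko n lam) (chiB c' R) ≤ (Kc n lam) ^ (1/p) := by
  have hp0 : (0:ℝ) < p := lt_of_lt_of_le one_pos hp
  refine iSup_le fun c => iSup_le fun r => iSup_le fun hr => ?_
  refine ENNReal.rpow_le_rpow ?_ (by positivity)
  refine ENNReal.div_le_of_le_mul ?_
  calc ∫⁻ x in ball c r, chiB c' R x ^ p * wSamko n lam x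
      ≤ ∫⁻ x in ball c r, wSamko n lam x :=
        setLIntegral_mono' measurableSet_ball (fun x _ => chi_pow_mul_le hp0 x _)
    _ ≤ Kc n lam * ENNReal.ofReal (r ^ lam) := w_avg_le hn hlam0 hlamn c hr
    _ = Kc n lam * phiSamko n lam c r := rfl

/-- Part 1: the Morrey norm of `S χ_{B(0,1)}` is infinite. -/
lemma part1 (hn : 0 < n) {p : ℝ} (hp : 1 ≤ p) (hlam0 : 0 < lam) (hlamn : lam < n) :
    morreyNorm n p (phiSamko n lam) (wSamko n lam) (calderonS n (chiB (0 : En n) 1)) = ⊤ := by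
  have hp0 : (0:ℝ) < p := lt_of_lt_of_le one_pos hp
  have hc0 : 0 < c0 n := c0_pos hn
  set X : ℝ≥0∞ := c0 n * (c0 n) ^ (1/p) with hXdef
  have hX : X ≠ 0 := by
    exact mul_ne_zero hc0.ne' (ENNReal.rpow_pos hc0 c0_ne_top).ne'
  have key : ∀ m : ℕ, (m : ℝ≥0∞) * X ≤
      morreyNorm n p (phiSamko n lam) (wSamko n lam) (calderonS n (chiB (0 : En n) 1)) := by
    intro m
    set r : ℝ := (2⁻¹:ℝ)^m with hrdef
    have hr : 0 < r := by positivity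
    -- pointwise lower bound for the Calderón operator on `ball 0 r`
    have step1 : ∀ x ∈ ball (0:En n) r,
        (m : ℝ≥0∞) * c0 n ≤ calderonS n (chiB (0 : En n) 1) x := by
      intro x hx
      rw [mem_ball_zero_iff] at hx
      calc (m : ℝ≥0∞) * c0 n
          ≤ ∫⁻ y in ball (0:En n) 1 \ ball 0 r, (ENNReal.ofReal (‖y‖^n))⁻¹ := log_lower hn m
        _ = ∫⁻ y in ball (0:En n) 1 \ ball 0 r,
              chiB (0 : En n) 1 y / ENNReal.ofReal (‖y‖^n) := by
            refine (setLIntegral_congr_fun (measurableSet_ball.diff measurableSet_ball)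
              (fun y hy => ?_)).symm
            rw [chiB, indicator_of_mem hy.1, Pi.one_apply, one_div]
        _ ≤ ∫⁻ y in {y : En n | ‖x‖ < ‖y‖},
              chiB (0 : En n) 1 y / ENNReal.ofReal (‖y‖^n) := by
            refine lintegral_mono_set fun y hy => ?_
            have := (mem_ann.mp hy).1
            exact mem_setOf.mpr (lt_of_lt_of_le hx this)
        _ ≤ calderonS n (chiB (0 : En n) 1) x := self_le_add_left _ _
    have hmc : ((m : ℝ≥0∞) * c0 n) ^ p ≠ ⊤ :=
      ENNReal.rpow_ne_top_of_nonneg hp0.le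
        (ENNReal.mul_ne_top (ENNReal.natCast_ne_top m) c0_ne_top)
    have step2 : ((m : ℝ≥0∞) * c0 n) ^ p * (c0 n * ENNReal.ofReal (r ^ lam))
        ≤ ∫⁻ x in ball (0:En n) r,
            calderonS n (chiB (0 : En n) 1) x ^ p * wSamko n lam x := by
      calc ((m : ℝ≥0∞) * c0 n) ^ p * (c0 n * ENNReal.ofReal (r ^ lam))
          ≤ ((m : ℝ≥0∞) * c0 n) ^ p * ∫⁻ x in ball (0:En n) r, wSamko n lam x := by
            gcongr
            exact w_ball_lower hn hlamn hr
        _ = ∫⁻ x in ball (0:En n) r, ((m : ℝ≥0∞) * c0 n) ^ p * wSamko n lam x :=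
            (lintegral_const_mul' _ _ hmc).symm
        _ ≤ ∫⁻ x in ball (0:En n) r,
              calderonS n (chiB (0 : En n) 1) x ^ p * wSamko n lam x := by
            refine setLIntegral_mono' measurableSet_ball fun x hx => ?_
            exact mul_le_mul_left (ENNReal.rpow_le_rpow (step1 x hx) hp0.le) _
    have hφ0 : ENNReal.ofReal (r ^ lam) ≠ 0 :=
      (ENNReal.ofReal_pos.mpr (Real.rpow_pos_of_pos hr lam)).ne'
    have step3 : ((m : ℝ≥0∞) * c0 n) ^ p * c0 n ≤
        (∫⁻ x in ball (0:En n) r,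
            calderonS n (chiB (0 : En n) 1) x ^ p * wSamko n lam x)
          / phiSamko n lam 0 r := by
      rw [phiSamko]
      rw [ENNReal.le_div_iff_mul_le (Or.inl hφ0) (Or.inl ENNReal.ofReal_ne_top)]
      calc ((m : ℝ≥0∞) * c0 n) ^ p * c0 n * ENNReal.ofReal (r ^ lam)
          = ((m : ℝ≥0∞) * c0 n) ^ p * (c0 n * ENNReal.ofReal (r ^ lam)) := by ring
        _ ≤ _ := step2
    have step4 : (m : ℝ≥0∞) * X ≤
        ((∫⁻ x in ball (0:En n) r,
            calderonS n (chiB (0 : En n) 1) x ^ p * wSamko n lam x)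
          / phiSamko n lam 0 r) ^ (1/p) := by
      refine le_trans ?_ (ENNReal.rpow_le_rpow step3 (by positivity))
      rw [ENNReal.mul_rpow_of_nonneg _ _ (by positivity : (0:ℝ) ≤ 1/p),
        ← ENNReal.rpow_mul, mul_one_div_cancel hp0.ne', ENNReal.rpow_one, hXdef]
      exact le_of_eq (by ring)
    refine le_trans step4 ?_
    rw [morreyNorm]
    exact le_iSup_of_le (0 : En n) (le_iSup_of_le r (le_iSup_of_le hr le_rfl))
  rw [eq_top_iff]
  calc (⊤:ℝ≥0∞) = (⨆ m : ℕ, (m : ℝ≥0∞)) * X := by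
        rw [iSup_natCast, ENNReal.top_mul hX]
    _ = ⨆ m : ℕ, (m : ℝ≥0∞) * X := ENNReal.iSup_mul _ _
    _ ≤ _ := iSup_le key

end Aux

/-- with `φ(B) = r_B^λ` and `w(x) = |x|^{λ-n}`, `0 < λ < n`, one has
`S(χ_{B(0,1)}) ∉ M^p(φ,w)`; hence `S` is not bounded on `M^p(φ,w)`, even though
`‖χ_B‖_{M^p(φ,w)} ≲ 1` for every ball centered at the origin. -/
theorem stmt9 {n : ℕ} (hn : 0 < n) (p lam : ℝ) (hp : 1 ≤ p)
    (hlam0 : 0 < lam) (hlamn : lam < n) :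
    morreyNorm n p (phiSamko n lam) (wSamko n lam) (calderonS n (chiB (0 : En n) 1)) = ⊤
    ∧ ¬ (∃ C : ℝ≥0∞, C ≠ ⊤ ∧ ∀ f : En n → ℝ≥0∞,
        morreyNorm n p (phiSamko n lam) (wSamko n lam) (calderonS n f)
          ≤ C * morreyNorm n p (phiSamko n lam) (wSamko n lam) f)
    ∧ ∃ C : ℝ≥0∞, C ≠ ⊤ ∧ ∀ R : ℝ, 0 < R →
        morreyNorm n p (phiSamko n lam) (wSamko n lam) (chiB (0 : En n) R) ≤ C := by
  have h1 := part1 hn hp hlam0 hlamn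
  have hKt : (Kc n lam) ^ (1/p) ≠ ⊤ :=
    ENNReal.rpow_ne_top_of_nonneg (by positivity) (Kc_ne_top hlam0)
  refine ⟨h1, ?_, ⟨(Kc n lam) ^ (1/p), hKt, fun R _ => part3 hn hp hlam0 hlamn _ R⟩⟩
  rintro ⟨C, hC, hb⟩
  have h2 := hb (chiB (0 : En n) 1)
  rw [h1] at h2
  have h3 : morreyNorm n p (phiSamko n lam) (wSamko n lam) (chiB (0 : En n) 1)
      ≤ (Kc n lam) ^ (1/p) := part3 hn hp hlam0 hlamn _ 1
  have h4 : (⊤:ℝ≥0∞) ≤ C * (Kc n lam) ^ (1/p) :=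
    le_trans h2 (mul_le_mul_right h3 C)
  exact ENNReal.mul_ne_top hC hKt (top_le_iff.mp h4)
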